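/- Let ν be a Lévy measure with tail ν̄ and Laplace exponent Φ(q) = βq + ∫₀^∞(1−e^{−qu})ν(du), β ≥ 0. If Φ is slowly varying at 0, then ν̄(u)/Φ(1/u) → 1 as u → ∞. -/

import Mathlib

open Real MeasureTheory Filter Set Topology

lemma aux_chord {x : ℝ} (h0 : 0 ≤ x) (h1 : x ≤ 1) :
    (1 - Real.exp (-1)) * x ≤ 1 - Real.exp (-x) := by
  have h := convexOn_exp.2 (Set.mem_univ (0:ℝ)) (Set.mem_univ (-1:ℝ))
    (by linarith : (0:ℝ) ≤ 1 - x) h0 (by ring)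
  simp only [smul_eq_mul, mul_zero, mul_neg_one, zero_add, Real.exp_zero] at h
  nlinarith [h]

lemma aux_le {x : ℝ} : 1 - Real.exp (-x) ≤ x := by
  have := Real.add_one_le_exp (-x)
  linarith

/-- if the Laplace exponent Φ is slowly varying at 0, then
`ν̄(u) ∼ Φ(1/u)` as `u → ∞`. -/
theorem stmt_5
    (ν : Measure ℝ) (β : ℝ) (hβ : 0 ≤ β)
    (hν0 : ν (Iic 0) = 0)
    (hνint : ∫⁻ u, ENNReal.ofReal (min 1 u) ∂ν < ⊤)
    (Φ : ℝ → ℝ)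
    (hΦ : ∀ q, 0 ≤ q → Φ q = β * q + ∫ u, (1 - Real.exp (-q * u)) ∂ν)
    (hSV : ∀ l > (0:ℝ), Tendsto (fun x => Φ (l * x) / Φ x) (𝓝[>] 0) (𝓝 1)) :
    Tendsto (fun u => (ν (Ioi u)).toReal / Φ (1 / u)) atTop (𝓝 1) := by
  -- a.e. positivity
  have hae : ∀ᵐ u ∂ν, 0 < u := by
    rw [ae_iff]
    convert hν0 using 2
    ext x; simp [not_lt]
  -- the dominating function is integrable
  have hw : Integrable (fun u : ℝ => min 1 u) ν := by
    refine ⟨(continuous_const.min continuous_id).aestronglyMeasurable, ?_⟩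
    rw [hasFiniteIntegral_iff_norm]
    have : ∫⁻ u, ENNReal.ofReal ‖min 1 u‖ ∂ν = ∫⁻ u, ENNReal.ofReal (min 1 u) ∂ν := by
      refine lintegral_congr_ae ?_
      filter_upwards [hae] with u hu
      rw [Real.norm_eq_abs, abs_of_nonneg (le_min one_pos.le hu.le)]
    rw [this]; exact hνint
  -- integrability of the integrand
  have hInt : ∀ q : ℝ, 0 ≤ q → Integrable (fun u => 1 - Real.exp (-q * u)) ν := by
    intro q hq
    have hm : AEStronglyMeasurable (fun u : ℝ => 1 - Real.exp (-q * u)) ν := by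
      apply Continuous.aestronglyMeasurable
      fun_prop
    refine Integrable.mono' (hw.const_mul (max 1 q)) hm ?_
    filter_upwards [hae] with u hu
    have he : Real.exp (-q * u) ≤ 1 := by
      rw [← Real.exp_zero]; exact Real.exp_le_exp.2 (by nlinarith)
    have he0 : 0 < Real.exp (-q * u) := Real.exp_pos _
    rw [Real.norm_eq_abs, abs_of_nonneg (by linarith)]
    rcases le_total u 1 with h | h
    · have h1 : 1 - Real.exp (-q * u) ≤ q * u := by
        have := aux_le (x := q * u); rw [neg_mul]; linarith
      have : min 1 u = u := min_eq_right h
      rw [this]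
      calc 1 - Real.exp (-q*u) ≤ q * u := h1
        _ ≤ max 1 q * u := by nlinarith [le_max_right 1 q]
    · have : min 1 u = 1 := min_eq_left h
      rw [this, mul_one]
      calc 1 - Real.exp (-q*u) ≤ 1 := by linarith
        _ ≤ max 1 q := le_max_left 1 q
  -- finiteness of tails
  have hfin : ∀ t : ℝ, 0 < t → ν (Ioi t) < ⊤ := by
    intro t ht
    by_contra h
    push_neg at h
    have htop : ν (Ioi t) = ⊤ := top_le_iff.mp h
    have hmt : 0 < min 1 t := lt_min one_pos ht
    have hle : ENNReal.ofReal (min 1 t) * ν (Ioi t) ≤ ∫⁻ u, ENNReal.ofReal (min 1 u) ∂ν := by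
      calc ENNReal.ofReal (min 1 t) * ν (Ioi t)
          = ∫⁻ _ in Ioi t, ENNReal.ofReal (min 1 t) ∂ν := (setLIntegral_const _ _).symm
        _ ≤ ∫⁻ u in Ioi t, ENNReal.ofReal (min 1 u) ∂ν := by
            refine setLIntegral_mono (by fun_prop) ?_
            intro u hu
            exact ENNReal.ofReal_le_ofReal (min_le_min le_rfl (le_of_lt hu))
        _ ≤ ∫⁻ u, ENNReal.ofReal (min 1 u) ∂ν := setLIntegral_le_lintegral _ _
    rw [htop, ENNReal.mul_top (ENNReal.ofReal_pos.2 hmt).ne'] at hle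
    exact absurd (top_le_iff.mp hle) hνint.ne
  -- nonnegativity of the integrand a.e.
  have hae_nonneg : ∀ q : ℝ, 0 ≤ q → (0:ℝ → ℝ) ≤ᶠ[ae ν] fun u => 1 - Real.exp (-q * u) := by
    intro q hq
    filter_upwards [hae] with u hu
    have : Real.exp (-q * u) ≤ 1 := by
      rw [← Real.exp_zero]; exact Real.exp_le_exp.2 (by nlinarith)
    simpa using this
  -- Φ is nonneg and monotone on [0,∞)
  have hΦnn : ∀ q : ℝ, 0 ≤ q → 0 ≤ Φ q := by
    intro q hq
    rw [hΦ q hq]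
    exact add_nonneg (mul_nonneg hβ hq) (integral_nonneg_of_ae (hae_nonneg q hq))
  have hβle : ∀ q : ℝ, 0 ≤ q → β * q ≤ Φ q := by
    intro q hq
    rw [hΦ q hq]
    linarith [integral_nonneg_of_ae (hae_nonneg q hq)]
  have hmono : ∀ q q' : ℝ, 0 ≤ q → q ≤ q' → Φ q ≤ Φ q' := by
    intro q q' hq hqq
    rw [hΦ q hq, hΦ q' (hq.trans hqq)]
    have : ∫ u, (1 - Real.exp (-q * u)) ∂ν ≤ ∫ u, (1 - Real.exp (-q' * u)) ∂ν := by
      refine integral_mono_ae (hInt q hq) (hInt q' (hq.trans hqq)) ?_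
      filter_upwards [hae] with u hu
      have : Real.exp (-q' * u) ≤ Real.exp (-q * u) := Real.exp_le_exp.2 (by nlinarith)
      linarith
    nlinarith
  -- Φ is positive on (0,∞)
  have hΦpos : ∀ q : ℝ, 0 < q → 0 < Φ q := by
    by_contra h
    push_neg at h
    obtain ⟨q₀, hq₀, hq₀le⟩ := h
    have hzero : ∀ x ∈ Ioc (0:ℝ) q₀, Φ (1 * x) / Φ x = 0 := by
      intro x hx
      have : Φ x = 0 :=
        le_antisymm (le_trans (hmono x q₀ hx.1.le hx.2) hq₀le) (hΦnn x hx.1.le)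
      rw [one_mul, this, div_zero]
    have h1 := hSV 1 one_pos
    have h2 : Tendsto (fun x : ℝ => Φ (1 * x) / Φ x) (𝓝[>] 0) (𝓝 0) := by
      refine Tendsto.congr' ?_ tendsto_const_nhds
      filter_upwards [Ioc_mem_nhdsGT hq₀] with x hx
      exact (hzero x hx).symm
    exact one_ne_zero (tendsto_nhds_unique h1 h2)
  -- Estimate 1: (1 - e^{-qt}) ν̄(t) ≤ Φ(q)
  have hEst1 : ∀ q : ℝ, 0 < q → ∀ t : ℝ, 0 < t →
      (1 - Real.exp (-q * t)) * (ν (Ioi t)).toReal ≤ Φ q := by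
    intro q hq t ht
    have h2 : ∫ _ in Ioi t, (1 - Real.exp (-q * t)) ∂ν
        ≤ ∫ u in Ioi t, (1 - Real.exp (-q * u)) ∂ν := by
      refine setIntegral_mono_on (integrableOn_const (hfin t ht).ne)
        ((hInt q hq.le).integrableOn) measurableSet_Ioi ?_
      intro u hu
      have : Real.exp (-q * u) ≤ Real.exp (-q * t) := Real.exp_le_exp.2 (by nlinarith [(mem_Ioi.mp hu).le])
      linarith
    have h1 : ∫ u in Ioi t, (1 - Real.exp (-q * u)) ∂ν ≤ ∫ u, (1 - Real.exp (-q * u)) ∂ν :=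
      setIntegral_le_integral (hInt q hq.le) (hae_nonneg q hq.le)
    have h3 : ∫ _ in Ioi t, (1 - Real.exp (-q * t)) ∂ν
        = (ν (Ioi t)).toReal * (1 - Real.exp (-q * t)) := by
      rw [setIntegral_const, smul_eq_mul, measureReal_def, mul_comm]
    rw [hΦ q hq.le]
    nlinarith [mul_nonneg hβ hq.le]
  -- Estimate 2
  set c : ℝ := (1 - Real.exp (-1))⁻¹ with hc
  have hc0 : 0 < 1 - Real.exp (-1) := by
    have : Real.exp (-1) < Real.exp 0 := Real.exp_lt_exp.2 (by norm_num)
    simpa [Real.exp_zero] using this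
  have hcpos : 0 < c := inv_pos.2 hc0
  have hEst2 : ∀ q : ℝ, 0 < q → ∀ δ : ℝ, 0 < δ → δ ≤ 1 →
      Φ q ≤ (ν (Ioi (δ / q))).toReal + δ * (1 + c) * Φ (q / δ) := by
    intro q hq δ hδ hδ1
    set t : ℝ := δ / q with htdef
    have ht : 0 < t := div_pos hδ hq
    -- pointwise bound
    have hpt : ∀ u : ℝ, 0 < u →
        1 - Real.exp (-q * u) ≤ (Ioi t).indicator (fun _ => (1:ℝ)) u
          + δ * c * (1 - Real.exp (-(q / δ) * u)) := by
      intro u hu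
      have he1 : Real.exp (-(q/δ) * u) ≤ 1 := by
        rw [← Real.exp_zero]
        exact Real.exp_le_exp.2 (by nlinarith [div_pos hq hδ])
      rcases le_or_gt u t with h | h
      · have hind : (Ioi t).indicator (fun _ => (1:ℝ)) u = 0 :=
          Set.indicator_of_notMem (by simpa using h) _
        rw [hind, zero_add]
        have h1 : 1 - Real.exp (-q * u) ≤ q * u := by
          have := aux_le (x := q * u); rw [neg_mul]; linarith
        have h2 : (q / δ) * u ≤ 1 := by
          rw [div_mul_eq_mul_div, div_le_one hδ]
          calc q * u ≤ q * t := by nlinarith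
            _ = δ := by rw [htdef]; field_simp
        have h3 : (1 - Real.exp (-1)) * ((q/δ) * u) ≤ 1 - Real.exp (-((q/δ) * u)) :=
          aux_chord (by positivity) h2
        have h4 : (q/δ) * u ≤ c * (1 - Real.exp (-((q/δ)*u))) := by
          have := mul_le_mul_of_nonneg_left h3 hcpos.le
          rwa [← mul_assoc, inv_mul_cancel₀ hc0.ne', one_mul] at this
        have h5 : q * u = δ * ((q/δ) * u) := by field_simp
        calc 1 - Real.exp (-q * u) ≤ q * u := h1
          _ = δ * ((q/δ) * u) := h5
          _ ≤ δ * (c * (1 - Real.exp (-((q/δ)*u)))) :=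
              mul_le_mul_of_nonneg_left h4 hδ.le
          _ = δ * c * (1 - Real.exp (-(q/δ) * u)) := by rw [neg_mul]; ring
      · have hind : (Ioi t).indicator (fun _ => (1:ℝ)) u = 1 :=
          Set.indicator_of_mem h _
        have : 1 - Real.exp (-q * u) ≤ 1 := by linarith [(Real.exp_pos (-q*u)).le]
        nlinarith [Real.exp_pos (-q * u), mul_nonneg (mul_nonneg hδ.le hcpos.le) (by linarith : (0:ℝ) ≤ 1 - Real.exp (-(q/δ) * u))]
    -- integrate
    have hind_int : Integrable ((Ioi t).indicator (fun _ => (1:ℝ))) ν := by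
      rw [integrable_indicator_iff measurableSet_Ioi]
      exact integrableOn_const (hfin t ht).ne
    have hq' : (0:ℝ) ≤ q / δ := (div_pos hq hδ).le
    have hRHS : Integrable (fun u => (Ioi t).indicator (fun _ => (1:ℝ)) u
        + δ * c * (1 - Real.exp (-(q / δ) * u))) ν :=
      hind_int.add ((hInt (q/δ) hq').const_mul _)
    have hint_le : ∫ u, (1 - Real.exp (-q * u)) ∂ν
        ≤ ∫ u, ((Ioi t).indicator (fun _ => (1:ℝ)) u
          + δ * c * (1 - Real.exp (-(q / δ) * u))) ∂ν := by
      refine integral_mono_ae (hInt q hq.le) hRHS ?_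
      filter_upwards [hae] with u hu
      exact hpt u hu
    have hsplit : ∫ u, ((Ioi t).indicator (fun _ => (1:ℝ)) u
        + δ * c * (1 - Real.exp (-(q / δ) * u))) ∂ν
        = (ν (Ioi t)).toReal + δ * c * ∫ u, (1 - Real.exp (-(q / δ) * u)) ∂ν := by
      rw [integral_add hind_int ((hInt (q/δ) hq').const_mul _),
        integral_indicator_const (1:ℝ) measurableSet_Ioi, smul_eq_mul, mul_one,
        integral_const_mul, measureReal_def]
    have hΦq' : ∫ u, (1 - Real.exp (-(q/δ) * u)) ∂ν ≤ Φ (q/δ) := by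
      rw [hΦ (q/δ) hq']
      nlinarith [mul_nonneg hβ hq']
    have hβq : β * q ≤ δ * Φ (q / δ) := by
      have h1 : β * q = δ * (β * (q / δ)) := by field_simp
      rw [h1]
      exact mul_le_mul_of_nonneg_left (hβle (q/δ) hq') hδ.le
    rw [hΦ q hq.le]
    have := hint_le
    rw [hsplit] at this
    have hcδ : 0 ≤ δ * c := by positivity
    nlinarith [mul_le_mul_of_nonneg_left hΦq' hcδ]
  -- limit of ratios along atTop
  have h1u : Tendsto (fun u : ℝ => 1 / u) atTop (𝓝[>] (0:ℝ)) := by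
    have hbase : Tendsto (fun u : ℝ => 1 / u) atTop (𝓝 0) := by
      simpa [one_div] using tendsto_inv_atTop_zero
    refine tendsto_nhdsWithin_of_tendsto_nhds_of_eventually_within _ hbase ?_
    · filter_upwards [eventually_gt_atTop (0:ℝ)] with u hu
      exact mem_Ioi.2 (by positivity)
  have hlim : ∀ l : ℝ, 0 < l →
      Tendsto (fun u : ℝ => Φ (l * (1/u)) / Φ (1/u)) atTop (𝓝 1) :=
    fun l hl => (hSV l hl).comp h1u
  -- final squeeze via order topology
  rw [tendsto_order]
  constructor
  · -- lower bound
    intro a ha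
    set ε : ℝ := 1 - a with hεdef
    have hε : 0 < ε := by simp [hεdef]; linarith
    set δ : ℝ := min 1 (ε / (4 * (1 + c))) with hδdef
    have hδpos : 0 < δ := lt_min one_pos (by positivity)
    have hδ1 : δ ≤ 1 := min_le_left _ _
    have hδc : δ * (1 + c) ≤ ε / 4 := by
      have h1 : δ ≤ ε / (4 * (1 + c)) := min_le_right _ _
      have h2 : (0:ℝ) < 1 + c := by linarith
      calc δ * (1 + c) ≤ (ε / (4 * (1 + c))) * (1 + c) :=
            mul_le_mul_of_nonneg_right h1 h2.le
        _ = ε / 4 := by field_simp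
    have hrat := (hlim δ hδpos).eventually (eventually_gt_nhds (by linarith : 1 - ε/2 < 1))
    filter_upwards [hrat, eventually_gt_atTop (0:ℝ)] with u hru hu
    have hP : 0 < Φ (1/u) := hΦpos _ (by positivity)
    have hq : 0 < δ / u := by positivity
    have key := hEst2 (δ / u) hq δ hδpos hδ1
    rw [show δ / (δ / u) = u by field_simp, show (δ / u) / δ = 1 / u by
      rw [div_div, mul_comm, ← div_div, div_self hδpos.ne']] at key
    have hrw : δ / u = δ * (1 / u) := by ring
    rw [hrw] at key
    -- key : Φ (δ * (1/u)) ≤ ν̄(u) + δ(1+c)Φ(1/u)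
    have hdiv : Φ (δ * (1/u)) / Φ (1/u) ≤ (ν (Ioi u)).toReal / Φ (1/u) + δ * (1 + c) := by
      rw [div_le_iff₀ hP, add_mul, div_mul_cancel₀ _ hP.ne']
      nlinarith [key]
    have : 1 - ε/2 < Φ (δ * (1/u)) / Φ (1/u) := hru
    have hgoal : a < (ν (Ioi u)).toReal / Φ (1/u) := by nlinarith
    exact hgoal
  · -- upper bound
    intro b hb
    -- choose λ with b * (1 - e^{-λ}) > 1 and λ > 0
    have htl : Tendsto (fun l : ℝ => b * (1 - Real.exp (-l))) atTop (𝓝 b) := by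
      have h1 : Tendsto (fun l : ℝ => Real.exp (-l)) atTop (𝓝 0) :=
        Real.tendsto_exp_atBot.comp tendsto_neg_atTop_atBot
      have h2 : Tendsto (fun l : ℝ => b * (1 - Real.exp (-l))) atTop (𝓝 (b * (1 - 0))) :=
        (tendsto_const_nhds.sub h1).const_mul b
      simpa using h2
    obtain ⟨lam, hlam1, hlam0⟩ :=
      ((htl.eventually (eventually_gt_nhds hb)).and (eventually_gt_atTop (0:ℝ))).exists
    set m : ℝ := 1 - Real.exp (-lam) with hm
    have hm0 : 0 < m := by
      have : Real.exp (-lam) < Real.exp 0 := Real.exp_lt_exp.2 (by linarith)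
      simp only [hm]
      rw [Real.exp_zero] at this
      linarith
    have hrat := (hlim lam hlam0).eventually (eventually_lt_nhds hlam1)
    filter_upwards [hrat, eventually_gt_atTop (0:ℝ)] with u hru hu
    have hP : 0 < Φ (1/u) := hΦpos _ (by positivity)
    have hq : 0 < lam * (1/u) := by positivity
    have key := hEst1 (lam * (1/u)) hq u hu
    rw [show -(lam * (1/u)) * u = -lam by field_simp] at key
    -- key : m * ν̄(u) ≤ Φ (lam * (1/u))
    have hru' : Φ (lam * (1/u)) < b * m * Φ (1/u) := by
      rw [div_lt_iff₀ hP] at hru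
      exact hru
    rw [div_lt_iff₀ hP]
    have h6 : m * (ν (Ioi u)).toReal < m * (b * Φ (1/u)) := by
      rw [show m * (b * Φ (1/u)) = b * m * Φ (1/u) by ring]
      linarith [key, hru']
    exact (mul_lt_mul_iff_of_pos_left hm0).mp h6
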